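/- Let g : [0,∞) → ℝ be twice differentiable such that g and its second derivative g'' are bounded. If (t_n) is a sequence with t_n → ∞ as n → ∞ and g(t_n) converges to liminf_{t→∞} g(t) (respectively, to limsup_{t→∞} g(t)), then g'(t_n) → 0 as n → ∞. -/

import Mathlib

open Filter

/-- Taylor-type estimate: if `|g''| ≤ C` on `[0,∞)`, then
`|g b - g a - (b - a) * g' a| ≤ C * |b - a| * |b - a|`. -/
lemma taylor_aux (g g' g'' : ℝ → ℝ)
    (hg' : ∀ t, 0 ≤ t → HasDerivAt g (g' t) t)
    (hg'' : ∀ t, 0 ≤ t → HasDerivAt g' (g'' t) t)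
    {C : ℝ} (hC : ∀ t, 0 ≤ t → |g'' t| ≤ C)
    {a b : ℝ} (ha : 0 ≤ a) (hb : 0 ≤ b) :
    |g b - g a - (b - a) * g' a| ≤ C * |b - a| * |b - a| := by
  -- First: g' is C-Lipschitz on [0,∞)
  have hlip : ∀ x y : ℝ, 0 ≤ x → 0 ≤ y → |g' y - g' x| ≤ C * |y - x| := by
    intro x y hx hy
    have := Convex.norm_image_sub_le_of_norm_hasDerivWithin_le
      (f := g') (f' := g'') (s := Set.Ici (0:ℝ))
      (fun z hz => (hg'' z hz).hasDerivWithinAt)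
      (fun z hz => hC z hz) (convex_Ici 0) hx hy
    simpa [Real.norm_eq_abs] using this
  -- Apply MVT to F s = g s - g' a * s on the interval between a and b
  set s : Set ℝ := Set.Icc (min a b) (max a b) with hs
  have hsub : s ⊆ Set.Ici (0:ℝ) := by
    intro x hx
    exact le_trans (le_min ha hb) hx.1
  have hF : ∀ x ∈ s, HasDerivWithinAt (fun u => g u - g' a * u) (g' x - g' a) s x := by
    intro x hx
    exact (((hg' x (hsub hx)).sub ((hasDerivAt_id x).const_mul (g' a))).congr_deriv
      (by ring)).hasDerivWithinAt
  have hbound : ∀ x ∈ s, ‖g' x - g' a‖ ≤ C * |b - a| := by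
    intro x hx
    have h1 : |g' x - g' a| ≤ C * |x - a| := hlip a x ha (hsub hx)
    have hx1 : min a b ≤ x := hx.1
    have hx2 : x ≤ max a b := hx.2
    have h2 : |x - a| ≤ |b - a| := by
      rcases le_total a b with h | h
      · rw [min_eq_left h] at hx1; rw [max_eq_right h] at hx2
        rw [abs_of_nonneg (by linarith : (0:ℝ) ≤ b - a), abs_sub_le_iff]
        exact ⟨by linarith, by linarith⟩
      · rw [min_eq_right h] at hx1; rw [max_eq_left h] at hx2
        rw [abs_of_nonpos (by linarith : b - a ≤ (0:ℝ)), abs_sub_le_iff]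
        exact ⟨by linarith, by linarith⟩
    have hCnn : 0 ≤ C := le_trans (abs_nonneg _) (hC 0 le_rfl)
    calc ‖g' x - g' a‖ = |g' x - g' a| := Real.norm_eq_abs _
      _ ≤ C * |x - a| := h1
      _ ≤ C * |b - a| := by nlinarith
  have has : a ∈ s := ⟨min_le_left _ _, le_max_left _ _⟩
  have hbs : b ∈ s := ⟨min_le_right _ _, le_max_right _ _⟩
  have := Convex.norm_image_sub_le_of_norm_hasDerivWithin_le
    (f := fun u => g u - g' a * u) (f' := fun x => g' x - g' a) (s := s)
    hF hbound (convex_Icc _ _) has hbs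
  have heq : (g b - g' a * b) - (g a - g' a * a) = g b - g a - (b - a) * g' a := by ring
  simpa [Real.norm_eq_abs, heq] using this

/-- If `g` is twice differentiable on `[0,∞)` with `g` and `g''` bounded, and
`g(t_n)` converges to `liminf_{t→∞} g(t)` (resp. `limsup_{t→∞} g(t)`) along a sequence
`t_n → ∞`, then `g'(t_n) → 0`. -/
theorem deriv_tendsto_zero_along_liminf_seq (g g' g'' : ℝ → ℝ)
    (hg' : ∀ t, 0 ≤ t → HasDerivAt g (g' t) t)
    (hg'' : ∀ t, 0 ≤ t → HasDerivAt g' (g'' t) t)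
    (hgbdd : ∃ C : ℝ, ∀ t, 0 ≤ t → |g t| ≤ C)
    (hg''bdd : ∃ C : ℝ, ∀ t, 0 ≤ t → |g'' t| ≤ C)
    (tn : ℕ → ℝ) (htn : Filter.Tendsto tn Filter.atTop Filter.atTop)
    (hconv :
      Filter.Tendsto (fun n => g (tn n)) Filter.atTop
          (nhds (Filter.liminf g Filter.atTop)) ∨
      Filter.Tendsto (fun n => g (tn n)) Filter.atTop
          (nhds (Filter.limsup g Filter.atTop))) :
    Filter.Tendsto (fun n => g' (tn n)) Filter.atTop (nhds 0) := by
  obtain ⟨C0, hC0⟩ := hg''bdd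
  obtain ⟨Cg, hCg⟩ := hgbdd
  set C : ℝ := max C0 1 with hCdef
  have hC1 : (1:ℝ) ≤ C := le_max_right _ _
  have hCpos : (0:ℝ) < C := lt_of_lt_of_le one_pos hC1
  have hCb : ∀ t, 0 ≤ t → |g'' t| ≤ C := fun t ht => (hC0 t ht).trans (le_max_left _ _)
  have htay : ∀ a b : ℝ, 0 ≤ a → 0 ≤ b →
      |g b - g a - (b - a) * g' a| ≤ C * |b - a| * |b - a| :=
    fun a b ha hb => taylor_aux g g' g'' hg' hg'' hCb ha hb
  -- boundedness of g eventually at atTop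
  have hgub : ∀ᶠ t in (atTop : Filter ℝ), g t ≤ Cg := by
    filter_upwards [eventually_ge_atTop (0:ℝ)] with t ht
    exact le_trans (le_abs_self _) (hCg t ht)
  have hglb : ∀ᶠ t in (atTop : Filter ℝ), -Cg ≤ g t := by
    filter_upwards [eventually_ge_atTop (0:ℝ)] with t ht
    exact neg_le_of_abs_le (hCg t ht)
  rw [Metric.tendsto_atTop]
  by_contra hcon
  push_neg at hcon
  obtain ⟨ε, hε, hfreq⟩ := hcon
  -- hfreq : ∀ N, ∃ n ≥ N, ε ≤ dist (g' (tn n)) 0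
  set δ : ℝ := ε / (2 * C) with hδdef
  have hδpos : 0 < δ := div_pos hε (by positivity)
  have hCδ : C * δ = ε / 2 := by
    field_simp [hδdef]
    rw [hδdef, mul_div_assoc', div_mul_eq_mul_div, div_eq_iff (mul_pos two_pos hCpos).ne']
    ring
  -- Key pointwise estimate
  have key : ∀ t : ℝ, δ ≤ t → ε ≤ |g' t| →
      (∃ s, 0 ≤ s ∧ |s - t| ≤ δ ∧ g s ≤ g t - δ * ε / 2) ∧
      (∃ s, 0 ≤ s ∧ |s - t| ≤ δ ∧ g t + δ * ε / 2 ≤ g s) := by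
    intro t ht hgt
    have ht0 : 0 ≤ t := le_trans hδpos.le ht
    have htm : 0 ≤ t - δ := by linarith
    have htp : 0 ≤ t + δ := by linarith
    have h1 := htay t (t - δ) ht0 htm
    have h2 := htay t (t + δ) ht0 htp
    have habs1 : |t - δ - t| = δ := by rw [show t - δ - t = -δ by ring, abs_neg, abs_of_pos hδpos]
    have habs2 : |t + δ - t| = δ := by rw [show t + δ - t = δ by ring, abs_of_pos hδpos]
    rw [habs1] at h1
    rw [habs2] at h2
    have hCδδ : C * δ * δ = δ * ε / 2 := by rw [hCδ]; ring
    rw [hCδδ] at h1 h2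
    have h1' := abs_le.mp h1
    have h2' := abs_le.mp h2
    rcases le_abs.mp hgt with hpos | hneg
    · -- g' t ≥ ε
      constructor
      · exact ⟨t - δ, htm, by rw [habs1], by nlinarith [hδpos.le, hpos, h1'.1, h1'.2]⟩
      · exact ⟨t + δ, htp, by rw [habs2], by nlinarith [hδpos.le, hpos, h2'.1, h2'.2]⟩
    · -- g' t ≤ -ε
      have hneg' : g' t ≤ -ε := le_neg_of_le_neg hneg
      constructor
      · exact ⟨t + δ, htp, by rw [habs2], by nlinarith [hδpos.le, hneg', h2'.1, h2'.2]⟩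
      · exact ⟨t - δ, htm, by rw [habs1], by nlinarith [hδpos.le, hneg', h1'.1, h1'.2]⟩
  have hfreq' : ∃ᶠ n in atTop, ε ≤ |g' (tn n)| := by
    rw [frequently_atTop]
    intro N
    obtain ⟨n, hn, hd⟩ := hfreq N
    exact ⟨n, hn, by simpa [Real.dist_eq] using hd⟩
  have hq : 0 < δ * ε / 4 := by positivity
  rcases hconv with hL | hM
  · -- liminf case
    set L := Filter.liminf g Filter.atTop with hLdef
    have hbdd : Filter.IsBoundedUnder (· ≥ ·) (atTop : Filter ℝ) g := ⟨-Cg, hglb⟩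
    have hev : ∀ᶠ t in (atTop : Filter ℝ), L - δ * ε / 4 < g t :=
      eventually_lt_of_lt_liminf (by linarith) hbdd
    obtain ⟨T, hT⟩ := eventually_atTop.mp hev
    have hevn : ∀ᶠ n in atTop, tn n ≥ T + δ ∧ tn n ≥ δ ∧ g (tn n) < L + δ * ε / 4 := by
      have h1 := htn.eventually (eventually_ge_atTop (T + δ))
      have h2 := htn.eventually (eventually_ge_atTop δ)
      have h3 : ∀ᶠ n in atTop, g (tn n) < L + δ * ε / 4 := by
        have := hL (Metric.ball_mem_nhds L hq)
        filter_upwards [this] with n hn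
        have := (Real.dist_eq _ _ ▸ Metric.mem_ball.mp hn)
        cases' abs_lt.mp this with _ h
        linarith
      filter_upwards [h1, h2, h3] with n a b c using ⟨a, b, c⟩
    obtain ⟨n, hgn, ⟨hT', hδ', hclose⟩⟩ := (hfreq'.and_eventually hevn).exists
    obtain ⟨⟨s, hs0, hsd, hsle⟩, -⟩ := key (tn n) hδ' hgn
    have hsT : T ≤ s := by
      have := abs_le.mp hsd
      linarith [this.1]
    have := hT s hsT
    linarith
  · -- limsup case
    set M := Filter.limsup g Filter.atTop with hMdef
    have hbdd : Filter.IsBoundedUnder (· ≤ ·) (atTop : Filter ℝ) g := ⟨Cg, hgub⟩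
    have hev : ∀ᶠ t in (atTop : Filter ℝ), g t < M + δ * ε / 4 :=
      eventually_lt_of_limsup_lt (by linarith) hbdd
    obtain ⟨T, hT⟩ := eventually_atTop.mp hev
    have hevn : ∀ᶠ n in atTop, tn n ≥ T + δ ∧ tn n ≥ δ ∧ M - δ * ε / 4 < g (tn n) := by
      have h1 := htn.eventually (eventually_ge_atTop (T + δ))
      have h2 := htn.eventually (eventually_ge_atTop δ)
      have h3 : ∀ᶠ n in atTop, M - δ * ε / 4 < g (tn n) := by
        have := hM (Metric.ball_mem_nhds M hq)
        filter_upwards [this] with n hn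
        have := (Real.dist_eq _ _ ▸ Metric.mem_ball.mp hn)
        cases' abs_lt.mp this with h _
        linarith
      filter_upwards [h1, h2, h3] with n a b c using ⟨a, b, c⟩
    obtain ⟨n, hgn, ⟨hT', hδ', hclose⟩⟩ := (hfreq'.and_eventually hevn).exists
    obtain ⟨-, ⟨s, hs0, hsd, hsge⟩⟩ := key (tn n) hδ' hgn
    have hsT : T ≤ s := by
      have := abs_le.mp hsd
      linarith [this.1]
    have := hT s hsT
    linarith
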